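/- In PSL(2,ℂ), the element x has order 5, y has order 2, z′ has order 2, y·z′⁻¹ has order 6, z′·x⁻¹ has order 2, and x·y⁻¹ has order 3 (so x, y, z′ satisfy the defining relations of the tetrahedral group presentation Γ(5,2,2,6,2,3) = ⟨x′,y′,z′ | x′⁵, y′², z′², (y′z′⁻¹)⁶, (z′x′⁻¹)², (x′y′⁻¹)³⟩). -/

import Mathlib

/-!
Setup: `PSL(2,ℂ)` as the quotient of `SL(2,ℂ)` by its center, the constants
`u = (1+√5)/2`, `ω = (1+√(-3))/2 = (1+√3·i)/2`, and the generators of the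
tetrahedral groups of Neumann–Reid.
-/

noncomputable section

abbrev SL2C := Matrix.SpecialLinearGroup (Fin 2) ℂ

/-- `PSL(2,ℂ)`, the quotient of `SL(2,ℂ)` by its center `{±I}`. -/
abbrev PSL2C := SL2C ⧸ Subgroup.center SL2C

/-- The projection `SL(2,ℂ) → PSL(2,ℂ)`, `A ↦ [A]`. -/
def pr : SL2C →* PSL2C := QuotientGroup.mk' _

def u : ℂ := ((1 + Real.sqrt 5) / 2 : ℝ)
def ω : ℂ := (1 + Real.sqrt 3 * Complex.I) / 2

lemma u_ne : u ≠ 0 := Complex.ofReal_ne_zero.mpr (by positivity)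

lemma ω_ne : ω ≠ 0 := by
  unfold ω
  intro h
  rw [div_eq_zero_iff] at h
  rcases h with h | h
  · have := congrArg Complex.re h
    simp at this
  · norm_num at h

def xSL : SL2C := ⟨!![u, -u⁻¹; u, 0], by
  rw [Matrix.det_fin_two_of]; field_simp [u_ne]; ring⟩

def ySL : SL2C := ⟨!![0, ω * u⁻¹; -ω⁻¹ * u, 0], by
  rw [Matrix.det_fin_two_of]; field_simp [u_ne, ω_ne]; ring⟩

def zSL : SL2C := ⟨!![0, ω ^ 2 * u⁻¹; -(ω ^ 2)⁻¹ * u, 0], by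
  rw [Matrix.det_fin_two_of]; field_simp [u_ne, ω_ne]; ring⟩

def x : PSL2C := pr xSL
def y : PSL2C := pr ySL
def z : PSL2C := pr zSL

def zSL' : SL2C := ⟨!![0, Complex.I * u⁻¹; Complex.I * u, 0], by
  rw [Matrix.det_fin_two_of]
  field_simp [u_ne]
  rw [Complex.I_sq]
  ring⟩

def z' : PSL2C := pr zSL'

-- helper lemmas
lemma hu2 : u ^ 2 = u + 1 := by
  unfold u
  have h : (Real.sqrt 5 : ℝ) ^ 2 = 5 := Real.sq_sqrt (by norm_num)
  have h' : (Real.sqrt 5 : ℂ) ^ 2 = 5 := by exact_mod_cast congrArg (Complex.ofReal ·) h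
  push_cast
  linear_combination h' / 4

lemma hui : u⁻¹ = u - 1 :=
  inv_eq_of_mul_eq_one_right (by linear_combination hu2)

lemma hω2 : ω ^ 2 = ω - 1 := by
  unfold ω
  have h : (Real.sqrt 3 : ℝ) ^ 2 = 3 := Real.sq_sqrt (by norm_num)
  have h'' : (Real.sqrt 3 : ℂ) ^ 2 * Complex.I ^ 2 = -3 := by
    rw [Complex.I_sq]
    have : (Real.sqrt 3 : ℂ) ^ 2 = 3 := by exact_mod_cast congrArg (Complex.ofReal ·) h
    rw [this]; ring
  linear_combination h'' / 4

lemma hωi : ω⁻¹ = 1 - ω :=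
  inv_eq_of_mul_eq_one_left (by linear_combination -hω2)

lemma negOneM : (-1 : Matrix (Fin 2) (Fin 2) ℂ) = !![-1, 0; 0, -1] := by
  ext i j
  fin_cases i <;> fin_cases j <;> simp

lemma oneM : (1 : Matrix (Fin 2) (Fin 2) ℂ) = !![1, 0; 0, 1] := by
  ext i j
  fin_cases i <;> fin_cases j <;> simp [Matrix.one_apply]

lemma pr_eq_one {A : SL2C} (h : A.val = 1 ∨ A.val = -1) : pr A = 1 := by
  rw [pr, QuotientGroup.mk'_apply, QuotientGroup.eq_one_iff,
    Matrix.SpecialLinearGroup.mem_center_iff]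
  rcases h with h | h
  · exact ⟨1, by norm_num, by simp [h]⟩
  · refine ⟨-1, by norm_num, ?_⟩
    rw [h, Matrix.scalar_apply]
    ext i j
    fin_cases i <;> fin_cases j <;> simp [Matrix.diagonal]

lemma pr_ne_one_of_offdiag {A : SL2C} (h : A.val 0 1 ≠ 0) : pr A ≠ 1 := by
  intro hc
  rw [pr, QuotientGroup.mk'_apply, QuotientGroup.eq_one_iff,
    Matrix.SpecialLinearGroup.mem_center_iff] at hc
  obtain ⟨r, -, hr⟩ := hc
  exact h (by rw [← hr]; simp [Matrix.scalar_apply])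

lemma pr_ne_one_of_diag {A : SL2C} (h1 : A.val 0 0 ≠ 1) (h2 : A.val 0 0 ≠ -1) : pr A ≠ 1 := by
  intro hc
  rw [pr, QuotientGroup.mk'_apply, QuotientGroup.eq_one_iff,
    Matrix.SpecialLinearGroup.mem_center_iff] at hc
  obtain ⟨r, hr2, hr⟩ := hc
  rw [Fintype.card_fin] at hr2
  have hd : A.val 0 0 = r := by rw [← hr]; simp [Matrix.scalar_apply]
  have : (r - 1) * (r + 1) = 0 := by linear_combination hr2
  rcases mul_eq_zero.mp this with h | h
  · exact h1 (by rw [hd]; linear_combination h)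
  · exact h2 (by rw [hd]; linear_combination h)

-- matrix power computations
lemma hx5 : (xSL ^ 5).val = -1 := by
  rw [Matrix.SpecialLinearGroup.coe_pow, negOneM]
  show (!![u, -u⁻¹; u, 0]) ^ 5 = _
  ext i j
  fin_cases i <;> fin_cases j <;>
    simp [pow_succ, Matrix.mul_apply, Fin.sum_univ_two, hui, -mul_eq_zero]
  · linear_combination (-1 + u - 2*u^2) * hu2
  · linear_combination (-u^2 + u^3) * hu2
  · linear_combination (-u^3) * hu2
  · linear_combination (-1 + u - 2*u^2 + u^3) * hu2

lemma hy2 : (ySL ^ 2).val = -1 := by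
  rw [Matrix.SpecialLinearGroup.coe_pow, negOneM]
  show (!![0, ω * u⁻¹; -ω⁻¹ * u, 0]) ^ 2 = _
  ext i j
  fin_cases i <;> fin_cases j <;>
    simp [pow_succ, Matrix.mul_apply, Fin.sum_univ_two, hui, hωi, -mul_eq_zero]
  · linear_combination (-1) * hu2 + (-u + u^2) * hω2
  · linear_combination (-1) * hu2 + (-u + u^2) * hω2

lemma hz2 : (zSL' ^ 2).val = -1 := by
  rw [Matrix.SpecialLinearGroup.coe_pow, negOneM]
  show (!![0, Complex.I * u⁻¹; Complex.I * u, 0]) ^ 2 = _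
  ext i j
  fin_cases i <;> fin_cases j <;>
    simp [pow_succ, Matrix.mul_apply, Fin.sum_univ_two, hui, -mul_eq_zero]
  · linear_combination (-1) * hu2 + (-u + u^2) * Complex.I_sq
  · linear_combination (-1) * hu2 + (-u + u^2) * Complex.I_sq

lemma hS : ((ySL * zSL'⁻¹ : SL2C)).val
    = !![-(Complex.I * ω), 0; 0, Complex.I * (1 - ω)] := by
  rw [Matrix.SpecialLinearGroup.coe_mul, Matrix.SpecialLinearGroup.coe_inv]
  show (!![0, ω * u⁻¹; -ω⁻¹ * u, 0]) * Matrix.adjugate (!![0, Complex.I * u⁻¹; Complex.I * u, 0]) = _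
  rw [Matrix.adjugate_fin_two_of]
  ext i j
  fin_cases i <;> fin_cases j <;>
    simp [Matrix.mul_apply, Fin.sum_univ_two, hui, hωi, -mul_eq_zero]
  · linear_combination (ω * Complex.I) * hu2
  · linear_combination (Complex.I - ω * Complex.I) * hu2

lemma hS6 : (((ySL * zSL'⁻¹) ^ 6 : SL2C)).val = -1 := by
  rw [Matrix.SpecialLinearGroup.coe_pow, hS, negOneM]
  ext i j
  fin_cases i <;> fin_cases j <;>
    simp [pow_succ, Matrix.mul_apply, Fin.sum_univ_two, -mul_eq_zero]
  · linear_combination (1 + ω - ω^3 - ω^4) * hω2 +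
      (ω^6 - ω^6*Complex.I^2 + ω^6*Complex.I^4) * Complex.I_sq
  · linear_combination (6*ω - 9*ω^2 + 5*ω^3 - ω^4) * hω2 +
      (1 - Complex.I^2 + Complex.I^4 - 6*ω + 6*ω*Complex.I^2 - 6*ω*Complex.I^4
        + 15*ω^2 - 15*ω^2*Complex.I^2 + 15*ω^2*Complex.I^4
        - 20*ω^3 + 20*ω^3*Complex.I^2 - 20*ω^3*Complex.I^4
        + 15*ω^4 - 15*ω^4*Complex.I^2 + 15*ω^4*Complex.I^4
        - 6*ω^5 + 6*ω^5*Complex.I^2 - 6*ω^5*Complex.I^4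
        + ω^6 - ω^6*Complex.I^2 + ω^6*Complex.I^4) * Complex.I_sq

lemma hS2_00 : (((ySL * zSL'⁻¹) ^ 2 : SL2C)).val 0 0 = 1 - ω := by
  rw [Matrix.SpecialLinearGroup.coe_pow, hS]
  simp [pow_succ, Matrix.mul_apply, Fin.sum_univ_two]
  linear_combination (-1) * hω2 + (ω^2) * Complex.I_sq

lemma hS3_00 : (((ySL * zSL'⁻¹) ^ 3 : SL2C)).val 0 0 = -Complex.I := by
  rw [Matrix.SpecialLinearGroup.coe_pow, hS]
  simp [pow_succ, Matrix.mul_apply, Fin.sum_univ_two]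
  linear_combination (-Complex.I - ω*Complex.I) * hω2 + (ω^3*Complex.I) * Complex.I_sq

lemma hV : ((zSL' * xSL⁻¹ : SL2C)).val = !![-Complex.I, Complex.I; 0, Complex.I] := by
  rw [Matrix.SpecialLinearGroup.coe_mul, Matrix.SpecialLinearGroup.coe_inv]
  show (!![0, Complex.I * u⁻¹; Complex.I * u, 0]) * Matrix.adjugate (!![u, -u⁻¹; u, 0]) = _
  rw [Matrix.adjugate_fin_two_of]
  ext i j
  fin_cases i <;> fin_cases j <;>
    simp [Matrix.mul_apply, Fin.sum_univ_two, hui, -mul_eq_zero]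
  · linear_combination Complex.I * hu2
  · linear_combination Complex.I * hu2
  · linear_combination Complex.I * hu2

lemma hV2 : (((zSL' * xSL⁻¹) ^ 2 : SL2C)).val = -1 := by
  rw [Matrix.SpecialLinearGroup.coe_pow, hV, negOneM]
  ext i j
  fin_cases i <;> fin_cases j <;>
    simp [pow_succ, Matrix.mul_apply, Fin.sum_univ_two, -mul_eq_zero]
  all_goals linear_combination Complex.I_sq

lemma hT : ((xSL * ySL⁻¹ : SL2C)).val = !![ω - 1, -ω; 0, -ω] := by
  rw [Matrix.SpecialLinearGroup.coe_mul, Matrix.SpecialLinearGroup.coe_inv]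
  show (!![u, -u⁻¹; u, 0]) * Matrix.adjugate (!![0, ω * u⁻¹; -ω⁻¹ * u, 0]) = _
  rw [Matrix.adjugate_fin_two_of]
  ext i j
  fin_cases i <;> fin_cases j <;>
    simp [Matrix.mul_apply, Fin.sum_univ_two, hui, hωi, -mul_eq_zero]
  · linear_combination (-1 + ω) * hu2
  · linear_combination (ω) * hu2
  · linear_combination (ω) * hu2

lemma hT3 : (((xSL * ySL⁻¹) ^ 3 : SL2C)).val = 1 := by
  rw [Matrix.SpecialLinearGroup.coe_pow, hT, oneM]
  ext i j
  fin_cases i <;> fin_cases j <;>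
    simp [pow_succ, Matrix.mul_apply, Fin.sum_univ_two, -mul_eq_zero]
  · linear_combination (-2 + ω) * hω2
  · linear_combination (-ω) * hω2
  · linear_combination (-1 - ω) * hω2

/-- `x, y, z'` satisfy the defining relations of `Γ(5,2,2,6,2,3)`. -/
theorem stmt1 :
    orderOf x = 5 ∧ orderOf y = 2 ∧ orderOf z' = 2 ∧
    orderOf (y * z'⁻¹) = 6 ∧ orderOf (z' * x⁻¹) = 2 ∧ orderOf (x * y⁻¹) = 3 := by
  haveI f2 : Fact (Nat.Prime 2) := ⟨by norm_num⟩
  haveI f3 : Fact (Nat.Prime 3) := ⟨by norm_num⟩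
  haveI f5 : Fact (Nat.Prime 5) := ⟨by norm_num⟩
  have key1 : orderOf x = 5 := by
    apply orderOf_eq_prime
    · rw [x, ← map_pow]
      exact pr_eq_one (Or.inr hx5)
    · rw [x]
      apply pr_ne_one_of_offdiag
      show -u⁻¹ ≠ 0
      simp [u_ne]
  have key2 : orderOf y = 2 := by
    apply orderOf_eq_prime
    · rw [y, ← map_pow]
      exact pr_eq_one (Or.inr hy2)
    · rw [y]
      apply pr_ne_one_of_offdiag
      show ω * u⁻¹ ≠ 0
      simp [u_ne, ω_ne]
  have key3 : orderOf z' = 2 := by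
    apply orderOf_eq_prime
    · rw [z', ← map_pow]
      exact pr_eq_one (Or.inr hz2)
    · rw [z']
      apply pr_ne_one_of_offdiag
      show Complex.I * u⁻¹ ≠ 0
      simp [u_ne, Complex.I_ne_zero]
  have hw : y * z'⁻¹ = pr (ySL * zSL'⁻¹) := by rw [y, z', ← map_inv, ← map_mul]
  have key4 : orderOf (y * z'⁻¹) = 6 := by
    have h6 : (y * z'⁻¹) ^ 6 = 1 := by
      rw [hw, ← map_pow]
      exact pr_eq_one (Or.inr hS6)
    have h2 : (y * z'⁻¹) ^ 2 ≠ 1 := by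
      rw [hw, ← map_pow]
      apply pr_ne_one_of_diag <;> rw [hS2_00]
      · intro h
        exact ω_ne (by linear_combination -h)
      · intro h
        have h2 : ω = 2 := by linear_combination -h
        have := hω2
        rw [h2] at this
        norm_num at this
    have h3 : (y * z'⁻¹) ^ 3 ≠ 1 := by
      rw [hw, ← map_pow]
      apply pr_ne_one_of_diag <;> rw [hS3_00] <;> intro h <;>
        · have := congrArg Complex.im h
          simp at this
    have hdvd : orderOf (y * z'⁻¹) ∣ 6 := orderOf_dvd_of_pow_eq_one h6
    have hne : orderOf (y * z'⁻¹) ≠ 0 := by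
      intro h0
      rw [h0] at hdvd
      norm_num at hdvd
    have hle : orderOf (y * z'⁻¹) ≤ 6 := Nat.le_of_dvd (by norm_num) hdvd
    have hge : 1 ≤ orderOf (y * z'⁻¹) := Nat.pos_of_ne_zero hne
    have h36 : orderOf (y * z'⁻¹) ∈ Nat.divisors 6 :=
      Nat.mem_divisors.mpr ⟨hdvd, by norm_num⟩
    rw [show Nat.divisors 6 = {1, 2, 3, 6} from by decide] at h36
    simp only [Finset.mem_insert, Finset.mem_singleton] at h36
    rcases h36 with h | h | h | h
    · exact absurd (by rw [orderOf_eq_one_iff.mp h, one_pow]) h2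
    · have hp := pow_orderOf_eq_one (y * z'⁻¹)
      rw [h] at hp
      exact absurd hp h2
    · have hp := pow_orderOf_eq_one (y * z'⁻¹)
      rw [h] at hp
      exact absurd hp h3
    · exact h
  have key5 : orderOf (z' * x⁻¹) = 2 := by
    have hv : z' * x⁻¹ = pr (zSL' * xSL⁻¹) := by rw [z', x, ← map_inv, ← map_mul]
    apply orderOf_eq_prime
    · rw [hv, ← map_pow]
      exact pr_eq_one (Or.inr hV2)
    · rw [hv]
      apply pr_ne_one_of_offdiag
      rw [hV]
      simp [Complex.I_ne_zero]
  have key6 : orderOf (x * y⁻¹) = 3 := by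
    have ht : x * y⁻¹ = pr (xSL * ySL⁻¹) := by rw [x, y, ← map_inv, ← map_mul]
    apply orderOf_eq_prime
    · rw [ht, ← map_pow]
      exact pr_eq_one (Or.inl hT3)
    · rw [ht]
      apply pr_ne_one_of_offdiag
      rw [hT]
      simp [ω_ne]
  exact ⟨key1, key2, key3, key4, key5, key6⟩
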